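/- arXiv:1812.03698 — 2 statements merged into one kernel-verified Lean document; each statement's English description precedes it below -/
import Mathlib

section
/- Let g = sp_{2n} (intro realisation, indices −n,…,−1,1,…,n), g_0 = sp_{2n−2} = span{F_{ij} : −n+1 ≤ i,j ≤ n−1}, and r = span{F_{n,i} : −n ≤ i ≤ n−1, i ≠ 0}. With the factor sequence F_{n,−n}^{α_1} F_{n,−1}^{α_2} F_{n,−2}^{α_3}⋯F_{n,−n+1}^{α_n} F_{n,1}^{α_{n+1}}⋯F_{n,n−1}^{α_{2n−1}} for elements of U(r), the monomial order of Definition 2.1 on S(r) — a monomial with exponent tuple ᾱ and h-weight ν is smaller than one with exponent tuple ᾱ' and h-weight ν' iff either ν − ν' is a positive root of sp_{2n}, or ν − ν' is not a root and ᾱ < ᾱ' lexicographically — satisfies condition (br-order). -/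
attribute [local instance 100] LieRing.ofAssociativeRing

abbrev glC (m : ℕ) := Matrix (Fin m) (Fin m) ℂ

/-- The position (as an integer in `[0, 2n)`) of the signed index
`i ∈ {−n, …, −1, 1, …, n}`. -/
def posC (n : ℕ) (i : ℤ) : ℤ := if i < 0 then (n : ℤ) + i else (n : ℤ) + i - 1

/-- The matrix unit `E_{ab}` with rows and columns indexed by `−n, …, −1, 1, …, n`. -/
def EglZ (n : ℕ) (a b : ℤ) : glC (2 * n) :=
  Matrix.of fun p q => if ((p : ℕ) : ℤ) = posC n a ∧ ((q : ℕ) : ℤ) = posC n b then 1 else 0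

def sgnZ (i : ℤ) : ℂ := if 0 < i then 1 else -1

/-- `F_{ij} = E_{ij} − sgn i · sgn j · E_{−j,−i}`. -/
noncomputable def FmatZ (n : ℕ) (i j : ℤ) : glC (2 * n) :=
  EglZ n i j - (sgnZ i * sgnZ j) • EglZ n (-j) (-i)

/-- `i` is a valid index: `i ≠ 0` and `|i| ≤ n`. -/
def ValidC (n : ℕ) (i : ℤ) : Prop := i ≠ 0 ∧ |i| ≤ (n : ℤ)

instance (n : ℕ) (i : ℤ) : Decidable (ValidC n i) := by unfold ValidC; infer_instance

/-- The symplectic Lie algebra `sp_{2n}`, the span of the `F_{ij}`. -/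
noncomputable def spAlgC (n : ℕ) : LieSubalgebra ℂ (glC (2 * n)) :=
  LieSubalgebra.lieSpan ℂ _ {x | ∃ i j : ℤ, ValidC n i ∧ ValidC n j ∧ x = FmatZ n i j}

/-- `F_{ij}` as an element of `sp_{2n}` (zero for invalid indices). -/
noncomputable def FspC (n : ℕ) (i j : ℤ) : spAlgC n :=
  if h : ValidC n i ∧ ValidC n j then
    ⟨FmatZ n i j, LieSubalgebra.subset_lieSpan ⟨i, j, h.1, h.2, rfl⟩⟩
  else 0

/-- The index of the `t`-th factor in the sequence
`F_{k,−k}, F_{k,−1}, F_{k,−2}, …, F_{k,−k+1}, F_{k,1}, …, F_{k,k−1}`. -/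
def facC (k t : ℕ) : ℤ := if t = 0 then -(k : ℤ) else if t ≤ k - 1 then -(t : ℤ) else (t : ℤ) - k + 1

/-- Action on `v` of the `S(r)`-monomial
`F_{n,−n}^{e 0} F_{n,−1}^{e 1} ⋯ F_{n,−n+1}^{e (n−1)} F_{n,1}^{e n} ⋯ F_{n,n−1}^{e (2n−2)}`
(the leftmost factor acts last). -/
noncomputable def rActC (n : ℕ) {V : Type} [AddCommGroup V] [Module ℂ V]
    [LieRingModule (spAlgC n) V] [LieModule ℂ (spAlgC n) V] (e : ℕ → ℕ) (v : V) : V :=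
  (List.range (2 * n - 1)).foldr
    (fun t w => ((LieModule.toEnd ℂ (spAlgC n) V (FspC n (n : ℤ) (facC n t))) ^ (e t)) w) v

/-- The exponents vanish outside `[0, 2n−2]`. -/
def SuppC (n : ℕ) (e : ℕ → ℕ) : Prop := ∀ t, 2 * n - 1 ≤ t → e t = 0

/-- The `h`-weight of the root vector `F_{ij}`, as a function on the basis
`F_{11}, …, F_{nn}` of the Cartan subalgebra (`1`-based index `k`). -/
def wtF (i j : ℤ) : ℕ → ℤ :=
  fun k =>
    (if 0 < i then (if (k : ℤ) = i then 1 else 0) else -(if (k : ℤ) = -i then 1 else 0)) -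
      (if 0 < j then (if (k : ℤ) = j then 1 else 0) else -(if (k : ℤ) = -j then 1 else 0))

/-- The `h`-weight of an `S(r)`-monomial at level `k`. -/
def wtLev (k : ℕ) (e : ℕ → ℕ) : ℕ → ℤ :=
  fun m => ∑ t ∈ Finset.range (2 * k - 1), (e t : ℤ) * wtF (k : ℤ) (facC k t) m

/-- The positive roots of `sp_{2k}`: the weights of the `F_{ij}` with `i < j`. -/
def PosRootsC (k : ℕ) : Set (ℕ → ℤ) :=
  {w | ∃ i j : ℤ, ValidC k i ∧ ValidC k j ∧ i < j ∧ w = wtF i j}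

/-- The roots of `sp_{2k}`. -/
def RootsC (k : ℕ) : Set (ℕ → ℤ) := {w | w ∈ PosRootsC k ∨ -w ∈ PosRootsC k}

/-- The lexicographic order on exponent tuples of length `N`. -/
def lexLt (N : ℕ) (e f : ℕ → ℕ) : Prop := ∃ t < N, e t < f t ∧ ∀ s < t, e s = f s

/-- The monomial order of Definition 2.1 on `S(r)`-monomials at level `k`:
`e < f` iff the difference of their `h`-weights is a positive root, or it is not a root
and `e` precedes `f` lexicographically. -/
def ltC (k : ℕ) (e f : ℕ → ℕ) : Prop :=
  (wtLev k e - wtLev k f) ∈ PosRootsC k ∨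
    ((wtLev k e - wtLev k f) ∉ RootsC k ∧ lexLt (2 * k - 1) e f)

/-- `e ∈ ess(λ) ∩ S(r)` for a fixed module with highest weight vector `v`:
`e • v` is not in the span of the `m̃ • v` with `m̃ < e`; such an `m̃` factors as
`m̃₀ m̃₁` with `m̃₁ ∈ S(r)`, `m̃₁ < e` in the order of Definition 2.1 and `m̃₀` a word
in the root vectors `F_{ij}` (`i > j`, `|i|, |j| ≤ n−1`) of `n₀⁻ ⊂ sp_{2n−2}`. -/
noncomputable def EssRC (n : ℕ) {V : Type} [AddCommGroup V] [Module ℂ V]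
    [LieRingModule (spAlgC n) V] [LieModule ℂ (spAlgC n) V] (v : V) (e : ℕ → ℕ) : Prop :=
  rActC n e v ∉
    Submodule.span ℂ
      {u : V | ∃ f, SuppC n f ∧ ltC n f e ∧
        ∃ l : List (ℤ × ℤ), (∀ x ∈ l, ValidC (n - 1) x.1 ∧ ValidC (n - 1) x.2 ∧ x.2 < x.1) ∧
          u = l.foldr (fun (x : ℤ × ℤ) w => ⁅FspC n x.1 x.2, w⁆) (rActC n f v)}

/-!
**Statement 6 (Lemma 2.2).**  The monomial order of Definition 2.1 on `S(r)`, with the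
factor sequence `F_{n,−n}^{α₁} F_{n,−1}^{α₂} ⋯ F_{n,−n+1}^{α_n} F_{n,1}^{α_{n+1}} ⋯
F_{n,n−1}^{α_{2n−1}}`, satisfies condition (br-order) for `sp_{2n−2} ⊂ sp_{2n}`.
-/
-- posC facts
lemma posC_nonneg {n : ℕ} {i : ℤ} (h : ValidC n i) : 0 ≤ posC n i := by
  obtain ⟨h0, hb⟩ := h
  rw [abs_le] at hb
  unfold posC; split <;> omega

lemma posC_lt {n : ℕ} {i : ℤ} (h : ValidC n i) : posC n i < 2 * n := by
  obtain ⟨h0, hb⟩ := h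
  rw [abs_le] at hb
  unfold posC; split <;> omega

lemma posC_inj {n : ℕ} {i j : ℤ} (hi : ValidC n i) (hj : ValidC n j)
    (h : posC n i = posC n j) : i = j := by
  obtain ⟨h0, hb⟩ := hi; obtain ⟨h0', hb'⟩ := hj
  rw [abs_le] at hb hb'
  unfold posC at h; split_ifs at h <;> omega

lemma E_mul {n : ℕ} (a b c d : ℤ) (hb : ValidC n b) (hc : ValidC n c) :
    EglZ n a b * EglZ n c d = if b = c then EglZ n a d else 0 := by
  have hlt : (posC n b).toNat < 2 * n := by
    have := posC_lt hb; have := posC_nonneg hb; omega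
  have hval : ((( (⟨(posC n b).toNat, hlt⟩ : Fin (2*n)) : ℕ) : ℤ)) = posC n b := by
    simp [Int.toNat_of_nonneg (posC_nonneg hb)]
  ext p q
  rw [Matrix.mul_apply]
  by_cases hbc : b = c
  · subst hbc
    simp only [if_pos rfl]
    rw [Finset.sum_eq_single (⟨(posC n b).toNat, hlt⟩ : Fin (2*n))]
    · simp only [EglZ, Matrix.of_apply, hval]
      by_cases h1 : ((p : ℕ) : ℤ) = posC n a <;> by_cases h2 : ((q : ℕ) : ℤ) = posC n d <;>
        simp [h1, h2]
    · intro r _ hr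
      simp only [EglZ, Matrix.of_apply]
      have : ¬ (((r : ℕ) : ℤ) = posC n b) := by
        intro h; apply hr; apply Fin.ext
        have : (r : ℕ) = (posC n b).toNat := by omega
        simpa using this
      simp [this]
    · simp
  · rw [if_neg hbc]
    simp only [Matrix.zero_apply]
    apply Finset.sum_eq_zero
    intro r _
    simp only [EglZ, Matrix.of_apply]
    by_cases h1 : ((r : ℕ) : ℤ) = posC n b
    · have h2 : ¬ (((r : ℕ) : ℤ) = posC n c) := by
        intro h2; exact hbc (posC_inj hb hc (h1 ▸ h2))
      simp [h2]
    · simp [h1]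

lemma sgn_sq (i : ℤ) : sgnZ i * sgnZ i = 1 := by unfold sgnZ; split <;> norm_num

lemma sgn_neg {i : ℤ} (h : i ≠ 0) : sgnZ (-i) = -sgnZ i := by
  unfold sgnZ
  rcases h.lt_or_gt with hi | hi
  · rw [if_pos (by omega), if_neg (by omega)]; ring
  · rw [if_neg (by omega), if_pos hi]

lemma valid_neg {n : ℕ} {i : ℤ} (h : ValidC n i) : ValidC n (-i) := by
  obtain ⟨h0, hb⟩ := h; exact ⟨by omega, by rwa [abs_neg]⟩

lemma valid_n {n : ℕ} (hn : 1 ≤ n) : ValidC n (n : ℤ) := by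
  constructor <;> simp <;> omega

lemma valid_of_small {n : ℕ} {i : ℤ} (h1 : i ≠ 0) (h2 : |i| ≤ (n : ℤ) - 1) :
    ValidC n i := ⟨h1, by omega⟩

/-- L2: bracket of two `r`-generators. -/
lemma L2m {n : ℕ} (hn : 1 ≤ n) {k l : ℤ} (hk : ValidC n k) (hl : ValidC n l)
    (hkn : k ≠ (n : ℤ)) (hln : l ≠ (n : ℤ)) :
    ⁅FmatZ n (n : ℤ) k, FmatZ n (n : ℤ) l⁆ =
      (if l = -k then sgnZ k else 0) • FmatZ n (n : ℤ) (-(n : ℤ)) := by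
  have hnv := valid_n (n := n) hn
  have hnn : -(n:ℤ) ≠ (n:ℤ) := by have := hn; omega
  rw [Ring.lie_def]
  unfold FmatZ
  simp only [sub_mul, mul_sub, smul_mul_assoc, mul_smul_comm, smul_smul]
  rw [E_mul (n:ℤ) k (n:ℤ) l hk hnv, E_mul (n:ℤ) k (-l) (-(n:ℤ)) hk (valid_neg hl),
    E_mul (-k) (-(n:ℤ)) (n:ℤ) l (valid_neg hnv) hnv,
    E_mul (-k) (-(n:ℤ)) (-l) (-(n:ℤ)) (valid_neg hnv) (valid_neg hl),
    E_mul (n:ℤ) l (n:ℤ) k hl hnv, E_mul (n:ℤ) l (-k) (-(n:ℤ)) hl (valid_neg hk),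
    E_mul (-l) (-(n:ℤ)) (n:ℤ) k (valid_neg hnv) hnv,
    E_mul (-l) (-(n:ℤ)) (-k) (-(n:ℤ)) (valid_neg hnv) (valid_neg hk)]
  have hsn : sgnZ (n:ℤ) = 1 := by unfold sgnZ; rw [if_pos (by exact_mod_cast hn)]
  have hsneg : sgnZ (-(n:ℤ)) = -1 := by
    rw [sgn_neg (by omega : (n:ℤ) ≠ 0), hsn]
  have c1 : (k = (n:ℤ)) ↔ False := iff_false_intro hkn
  have c2 : ((-(n:ℤ) : ℤ) = (n:ℤ)) ↔ False := iff_false_intro hnn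
  have c3 : ((-(n:ℤ) : ℤ) = -l) ↔ False := iff_false_intro (fun hh => hln (by omega))
  have c4 : (l = (n:ℤ)) ↔ False := iff_false_intro hln
  have c5 : ((-(n:ℤ) : ℤ) = -k) ↔ False := iff_false_intro (fun hh => hkn (by omega))
  by_cases h : l = -k
  · have c6 : (l = -k) ↔ True := iff_true_intro h
    have c7 : (k = -l) ↔ True := iff_true_intro (by omega)
    have hsl : sgnZ l = -sgnZ k := by rw [h, sgn_neg hk.1]
    simp only [c1, c2, c3, c4, c5, c6, c7, if_true, if_false, hsn, hsneg, hsl, neg_neg]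
    module
  · have c6 : (l = -k) ↔ False := iff_false_intro h
    have c7 : (k = -l) ↔ False := iff_false_intro (fun hh => h (by omega))
    simp only [c1, c2, c3, c4, c5, c6, c7, if_true, if_false]
    simp

lemma sgn_cases (i : ℤ) : sgnZ i = 1 ∨ sgnZ i = -1 := by
  unfold sgnZ; split; exacts [Or.inl rfl, Or.inr rfl]

/-- L1: bracket of an `n₀`-generator with an `r`-generator. -/
lemma L1m {n : ℕ} (hn : 1 ≤ n) {i j k : ℤ} (hi0 : i ≠ 0) (hj0 : j ≠ 0)
    (hi : |i| ≤ (n : ℤ) - 1) (hj : |j| ≤ (n : ℤ) - 1)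
    (hk : ValidC n k) (hkn : k ≠ (n : ℤ)) :
    ⁅FmatZ n i j, FmatZ n (n : ℤ) k⁆ =
      (-(if k = i then (1:ℂ) else 0)) • FmatZ n (n : ℤ) j +
        (if k = -j then sgnZ i * sgnZ j else 0) • FmatZ n (n : ℤ) (-i) := by
  have hnv := valid_n (n := n) hn
  obtain ⟨hi1, hi2⟩ := abs_le.mp hi
  obtain ⟨hj1, hj2⟩ := abs_le.mp hj
  have hiv : ValidC n i := ⟨hi0, abs_le.mpr ⟨by omega, by omega⟩⟩
  have hjv : ValidC n j := ⟨hj0, abs_le.mpr ⟨by omega, by omega⟩⟩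
  rw [Ring.lie_def]
  unfold FmatZ
  simp only [sub_mul, mul_sub, smul_mul_assoc, mul_smul_comm, smul_smul]
  rw [E_mul i j (n:ℤ) k hjv hnv, E_mul i j (-k) (-(n:ℤ)) hjv (valid_neg hk),
    E_mul (-j) (-i) (n:ℤ) k (valid_neg hiv) hnv,
    E_mul (-j) (-i) (-k) (-(n:ℤ)) (valid_neg hiv) (valid_neg hk),
    E_mul (n:ℤ) k i j hk hiv, E_mul (n:ℤ) k (-j) (-i) hk (valid_neg hjv),
    E_mul (-k) (-(n:ℤ)) i j (valid_neg hnv) hiv,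
    E_mul (-k) (-(n:ℤ)) (-j) (-i) (valid_neg hnv) (valid_neg hjv)]
  have hsn : sgnZ (n:ℤ) = 1 := by unfold sgnZ; rw [if_pos (by exact_mod_cast hn)]
  have c1 : (j = (n:ℤ)) ↔ False := iff_false_intro (by omega)
  have c2 : ((-i : ℤ) = (n:ℤ)) ↔ False := iff_false_intro (by omega)
  have c3 : ((-(n:ℤ) : ℤ) = i) ↔ False := iff_false_intro (by omega)
  have c4 : ((-(n:ℤ) : ℤ) = -j) ↔ False := iff_false_intro (by omega)
  by_cases hki : k = i <;> by_cases hkj : k = -j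
  · -- k = i and k = -j (so j = -i)
    have d1 : (k = i) ↔ True := iff_true_intro hki
    have d2 : ((-i:ℤ) = -k) ↔ True := iff_true_intro (by omega)
    have d3 : (k = -j) ↔ True := iff_true_intro hkj
    have d4 : (j = -k) ↔ True := iff_true_intro (by omega)
    have hsk : sgnZ k = sgnZ i := by rw [hki]
    have hsj : sgnZ j = -sgnZ i := by
      have : j = -i := by omega
      rw [this, sgn_neg hi0]
    rcases sgn_cases i with hs | hs <;>
      simp only [c1, c2, c3, c4, d1, d2, d3, d4, if_true, if_false, hsn, hsk, hsj, hs, sgn_neg hi0, sgn_neg hj0,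
        neg_neg] <;> module
  · have d1 : (k = i) ↔ True := iff_true_intro hki
    have d2 : ((-i:ℤ) = -k) ↔ True := iff_true_intro (by omega)
    have d3 : (k = -j) ↔ False := iff_false_intro hkj
    have d4 : (j = -k) ↔ False := iff_false_intro (by omega)
    have hsk : sgnZ k = sgnZ i := by rw [hki]
    rcases sgn_cases i with hs | hs <;>
      simp only [c1, c2, c3, c4, d1, d2, d3, d4, if_true, if_false, hsn, hsk, hs, sgn_neg hi0, sgn_neg hj0,
        neg_neg] <;> module
  · have d1 : (k = i) ↔ False := iff_false_intro hki
    have d2 : ((-i:ℤ) = -k) ↔ False := iff_false_intro (by omega)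
    have d3 : (k = -j) ↔ True := iff_true_intro hkj
    have d4 : (j = -k) ↔ True := iff_true_intro (by omega)
    have hsk : sgnZ k = -sgnZ j := by
      have : k = -j := hkj
      rw [this, sgn_neg hj0]
    rcases sgn_cases i with hs | hs <;> rcases sgn_cases j with hs' | hs' <;>
      simp only [c1, c2, c3, c4, d1, d2, d3, d4, if_true, if_false, hsn, hsk, hs, hs', sgn_neg hi0, sgn_neg hj0,
        neg_neg] <;> module
  · have d1 : (k = i) ↔ False := iff_false_intro hki
    have d2 : ((-i:ℤ) = -k) ↔ False := iff_false_intro (by omega)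
    have d3 : (k = -j) ↔ False := iff_false_intro hkj
    have d4 : (j = -k) ↔ False := iff_false_intro (by omega)
    simp only [c1, c2, c3, c4, d1, d2, d3, d4, if_true, if_false]
    simp

/-! ### `FspC`-level lemmas -/

lemma FspC_coe {n : ℕ} {i j : ℤ} (hi : ValidC n i) (hj : ValidC n j) :
    (FspC n i j : glC (2 * n)) = FmatZ n i j := by
  rw [FspC, dif_pos ⟨hi, hj⟩]

lemma L2s {n : ℕ} (hn : 1 ≤ n) {k l : ℤ} (hk : ValidC n k) (hl : ValidC n l)
    (hkn : k ≠ (n : ℤ)) (hln : l ≠ (n : ℤ)) :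
    ⁅FspC n (n : ℤ) k, FspC n (n : ℤ) l⁆ =
      (if l = -k then sgnZ k else 0) • FspC n (n : ℤ) (-(n : ℤ)) := by
  have hnv := valid_n (n := n) hn
  apply Subtype.ext
  have hcast : ∀ (c : ℂ) (x : spAlgC n), ((c • x : spAlgC n) : glC (2*n)) = c • (x : glC (2*n)) :=
    fun _ _ => rfl
  rw [LieSubalgebra.coe_bracket, hcast]
  rw [FspC_coe hnv hk, FspC_coe hnv hl, FspC_coe hnv (valid_neg hnv)]
  exact L2m hn hk hl hkn hln

lemma L1s {n : ℕ} (hn : 1 ≤ n) {i j k : ℤ} (hi0 : i ≠ 0) (hj0 : j ≠ 0)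
    (hi : |i| ≤ (n : ℤ) - 1) (hj : |j| ≤ (n : ℤ) - 1)
    (hk : ValidC n k) (hkn : k ≠ (n : ℤ)) :
    ⁅FspC n i j, FspC n (n : ℤ) k⁆ =
      (-(if k = i then (1:ℂ) else 0)) • FspC n (n : ℤ) j +
        (if k = -j then sgnZ i * sgnZ j else 0) • FspC n (n : ℤ) (-i) := by
  have hnv := valid_n (n := n) hn
  have hiv : ValidC n i := ⟨hi0, by have := abs_le.mp hi; rw [abs_le]; omega⟩
  have hjv : ValidC n j := ⟨hj0, by have := abs_le.mp hj; rw [abs_le]; omega⟩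
  apply Subtype.ext
  have hcast : ∀ (c : ℂ) (x : spAlgC n), ((c • x : spAlgC n) : glC (2*n)) = c • (x : glC (2*n)) :=
    fun _ _ => rfl
  have hadd : ∀ (x y : spAlgC n), ((x + y : spAlgC n) : glC (2*n)) = (x : glC (2*n)) + y :=
    fun _ _ => rfl
  rw [LieSubalgebra.coe_bracket, hadd, hcast, hcast]
  rw [FspC_coe hiv hjv, FspC_coe hnv hk, FspC_coe hnv hjv, FspC_coe hnv (valid_neg hiv)]
  exact L1m hn hi0 hj0 hi hj hk hkn

/-! ### `facC` and `posOf` -/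

/-- The position of the column index `k` in the factor sequence. -/
def posOf (n : ℕ) (k : ℤ) : ℕ :=
  if k = -(n : ℤ) then 0 else if k < 0 then (-k).toNat else (k + n - 1).toNat

lemma facC_posOf {n : ℕ} (hn : 1 ≤ n) {k : ℤ} (hk : ValidC n k) (hkn : k ≠ (n : ℤ)) :
    facC n (posOf n k) = k := by
  obtain ⟨h0, hb⟩ := hk
  rw [abs_le] at hb
  unfold facC posOf
  split_ifs <;> omega

lemma posOf_lt {n : ℕ} (hn : 1 ≤ n) {k : ℤ} (hk : ValidC n k) (hkn : k ≠ (n : ℤ)) :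
    posOf n k < 2 * n - 1 := by
  obtain ⟨h0, hb⟩ := hk
  rw [abs_le] at hb
  unfold posOf
  split_ifs <;> omega

lemma facC_valid {n : ℕ} (hn : 1 ≤ n) {t : ℕ} (ht : t < 2 * n - 1) :
    ValidC n (facC n t) ∧ facC n t ≠ (n : ℤ) := by
  refine ⟨⟨?_, abs_le.mpr ⟨?_, ?_⟩⟩, ?_⟩ <;> (unfold facC; split_ifs <;> omega)

lemma posOf_facC {n : ℕ} (hn : 1 ≤ n) {t : ℕ} (ht : t < 2 * n - 1) :
    posOf n (facC n t) = t := by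
  unfold facC posOf
  split_ifs <;> omega

/-! ### weights -/

/-- `φ i`, so that `wtF i j = φ i - φ j`. -/
def phiW (i : ℤ) : ℕ → ℤ :=
  fun k => if 0 < i then (if (k : ℤ) = i then 1 else 0) else -(if (k : ℤ) = -i then 1 else 0)

lemma wtF_eq (i j : ℤ) : wtF i j = phiW i - phiW j := rfl

lemma phiW_neg {i : ℤ} (h : i ≠ 0) : phiW (-i) = -phiW i := by
  funext k
  unfold phiW
  simp only [Pi.neg_apply, neg_neg]
  rcases h.lt_or_gt with hi | hi
  · rw [if_pos (by omega : (0:ℤ) < -i), if_neg (not_lt.mpr hi.le)]; ring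
  · rw [if_neg (by omega : ¬ (0:ℤ) < -i), if_pos hi]

/-- Total degree of an exponent tuple. -/
def degC (n : ℕ) (f : ℕ → ℕ) : ℕ := ∑ t ∈ Finset.range (2 * n - 1), f t

lemma sum_update_aux {M : Type*} [AddCommGroup M] (g : ℕ → M) (t₀ N : ℕ) (ht : t₀ < N) (b : M) :
    ∑ t ∈ Finset.range N, Function.update g t₀ b t = ∑ t ∈ Finset.range N, g t + (b - g t₀) := by
  rw [Finset.sum_update_of_mem (Finset.mem_range.mpr ht)]
  rw [Finset.sum_eq_sum_sdiff_singleton_add (Finset.mem_range.mpr ht) g]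
  abel

lemma wtLev_update {n : ℕ} (f : ℕ → ℕ) {t₀ : ℕ} (ht : t₀ < 2 * n - 1) (c : ℕ) :
    wtLev n (Function.update f t₀ c) =
      wtLev n f + fun m => ((c : ℤ) - (f t₀ : ℤ)) * wtF (n : ℤ) (facC n t₀) m := by
  funext m
  simp only [wtLev, Pi.add_apply]
  have key : (fun t => ((Function.update f t₀ c t : ℕ) : ℤ) * wtF (n : ℤ) (facC n t) m) =
      Function.update (fun t => ((f t : ℕ) : ℤ) * wtF (n : ℤ) (facC n t) m) t₀
        ((c : ℤ) * wtF (n : ℤ) (facC n t₀) m) := by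
    funext t
    by_cases h : t = t₀
    · subst h; simp
    · simp [Function.update_of_ne h]
  calc ∑ t ∈ Finset.range (2 * n - 1), ((Function.update f t₀ c t : ℕ) : ℤ) *
          wtF (n : ℤ) (facC n t) m
      = ∑ t ∈ Finset.range (2 * n - 1), Function.update
          (fun t => ((f t : ℕ) : ℤ) * wtF (n : ℤ) (facC n t) m) t₀
          ((c : ℤ) * wtF (n : ℤ) (facC n t₀) m) t := by rw [key]
    _ = _ := by
        rw [sum_update_aux _ _ _ ht]; ring

lemma degC_update {n : ℕ} (f : ℕ → ℕ) {t₀ : ℕ} (ht : t₀ < 2 * n - 1) (c : ℕ) :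
    (degC n (Function.update f t₀ c) : ℤ) = (degC n f : ℤ) + c - f t₀ := by
  unfold degC
  push_cast
  have key : (fun t => ((Function.update f t₀ c t : ℕ) : ℤ)) =
      Function.update (fun t => ((f t : ℕ) : ℤ)) t₀ (c : ℤ) := by
    funext t
    by_cases h : t = t₀
    · subst h; simp
    · simp [Function.update_of_ne h]
  calc ∑ t ∈ Finset.range (2 * n - 1), ((Function.update f t₀ c t : ℕ) : ℤ)
      = ∑ t ∈ Finset.range (2 * n - 1), Function.update (fun t => ((f t : ℕ) : ℤ)) t₀ (c : ℤ) t := by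
        rw [key]
    _ = _ := by rw [sum_update_aux _ _ _ ht]; push_cast; ring

lemma SuppC_update {n : ℕ} {f : ℕ → ℕ} (hf : SuppC n f) {t₀ : ℕ} (ht : t₀ < 2 * n - 1) (c : ℕ) :
    SuppC n (Function.update f t₀ c) := by
  intro t htt
  rw [Function.update_of_ne (by omega)]
  exact hf t htt

lemma degC_pos_exists {n : ℕ} {f : ℕ → ℕ} (h : degC n f ≠ 0) :
    ∃ t, t < 2 * n - 1 ∧ f t ≠ 0 := by
  by_contra hc
  push_neg at hc
  exact h (Finset.sum_eq_zero fun t htt => hc t (Finset.mem_range.mp htt))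

lemma degC_eq_zero {n : ℕ} {f : ℕ → ℕ} (h : degC n f = 0) {t : ℕ} (ht : t < 2 * n - 1) :
    f t = 0 :=
  Finset.sum_eq_zero_iff.mp h t (Finset.mem_range.mpr ht)

/-! ### words in the generators of `r` -/

/-- Action of a word in the `F_{n,k}`. -/
noncomputable def Wact (n : ℕ) {V : Type} [AddCommGroup V] [Module ℂ V]
    [LieRingModule (spAlgC n) V] [LieModule ℂ (spAlgC n) V] (ks : List ℤ) (v : V) : V :=
  ks.foldr (fun k w => ⁅FspC n (n : ℤ) k, w⁆) v

/-- The canonical word of an exponent tuple. -/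
def wordC (n : ℕ) (f : ℕ → ℕ) : List ℤ :=
  (List.range (2 * n - 1)).flatMap fun t => List.replicate (f t) (facC n t)

section WordLemmas

variable {n : ℕ} {V : Type} [AddCommGroup V] [Module ℂ V]
    [LieRingModule (spAlgC n) V] [LieModule ℂ (spAlgC n) V]

lemma Wact_append (l₁ l₂ : List ℤ) (v : V) :
    Wact n (l₁ ++ l₂) v = Wact n l₁ (Wact n l₂ v) := by
  unfold Wact; rw [List.foldr_append]

lemma Wact_replicate (m : ℕ) (k : ℤ) (v : V) :
    Wact n (List.replicate m k) v = ((LieModule.toEnd ℂ (spAlgC n) V (FspC n (n : ℤ) k)) ^ m) v := by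
  induction m with
  | zero => rfl
  | succ m ih =>
      rw [List.replicate_succ]
      show ⁅FspC n (n : ℤ) k, Wact n (List.replicate m k) v⁆ = _
      rw [ih, pow_succ']
      rfl

lemma rActC_eq_Wact (f : ℕ → ℕ) (v : V) : rActC n f v = Wact n (wordC n f) v := by
  unfold rActC wordC
  induction List.range (2 * n - 1) with
  | nil => rfl
  | cons a l ih =>
      rw [List.foldr_cons, List.flatMap_cons, Wact_append, Wact_replicate, ih]

lemma word_peel {f : ℕ → ℕ} {t₀ : ℕ} (h0 : ∀ t < t₀, f t = 0) (ht : t₀ < 2 * n - 1)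
    (h1 : 1 ≤ f t₀) :
    wordC n f = facC n t₀ :: wordC n (Function.update f t₀ (f t₀ - 1)) := by
  unfold wordC
  obtain ⟨m, hm⟩ : ∃ m, 2 * n - 1 - t₀ = m + 1 := ⟨2 * n - 2 - t₀, by omega⟩
  have hsplit : List.range (2 * n - 1) =
      List.range' 0 t₀ ++ (t₀ :: List.range' (t₀ + 1) m) := by
    rw [List.range_eq_range']
    have h2 := List.range'_append (s := 0) (m := t₀) (n := m + 1) (step := 1)
    simp only [one_mul, zero_add] at h2
    rw [← List.range'_succ, h2]
    congr 1
    omega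
  have hmem1 : ∀ t ∈ List.range' 0 t₀ , t < t₀ := by
    intro t htt; have := List.mem_range'_1.mp htt; omega
  have hmem2 : ∀ t ∈ List.range' (t₀ + 1) m, t ≠ t₀ := by
    intro t htt; have := List.mem_range'_1.mp htt; omega
  rw [hsplit, List.flatMap_append, List.flatMap_append, List.flatMap_cons, List.flatMap_cons]
  have hz1 : (List.range' 0 t₀).flatMap (fun t => List.replicate (f t) (facC n t)) = [] :=
    List.flatMap_eq_nil_iff.mpr fun t htt => by rw [h0 t (hmem1 t htt)]; rfl
  have hz2 : (List.range' 0 t₀).flatMap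
      (fun t => List.replicate (Function.update f t₀ (f t₀ - 1) t) (facC n t)) = [] :=
    List.flatMap_eq_nil_iff.mpr fun t htt => by
      rw [Function.update_of_ne (by have := hmem1 t htt; omega), h0 t (hmem1 t htt)]; rfl
  rw [hz1, hz2]
  have htail : ∀ L : List ℕ, (∀ t ∈ L, t ≠ t₀) →
      L.flatMap (fun t => List.replicate (Function.update f t₀ (f t₀ - 1) t) (facC n t)) =
      L.flatMap (fun t => List.replicate (f t) (facC n t)) := by
    intro L
    induction L with
    | nil => intro _; rfl
    | cons a l ih =>
        intro hL
        rw [List.flatMap_cons, List.flatMap_cons,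
          Function.update_of_ne (hL a (by simp)), ih (fun t htt => hL t (by simp [htt]))]
  rw [htail _ hmem2, Function.update_self]
  have h3 : f t₀ = (f t₀ - 1) + 1 := by omega
  rw [h3]
  simp [List.replicate_succ]

lemma rAct_peel {f : ℕ → ℕ} {t₀ : ℕ} (h0 : ∀ t < t₀, f t = 0) (ht : t₀ < 2 * n - 1)
    (h1 : 1 ≤ f t₀) (v : V) :
    rActC n f v = ⁅FspC n (n : ℤ) (facC n t₀),
      rActC n (Function.update f t₀ (f t₀ - 1)) v⁆ := by
  rw [rActC_eq_Wact, rActC_eq_Wact, word_peel h0 ht h1]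
  rfl

lemma rAct_bump {f : ℕ → ℕ} {t₀ : ℕ} (h0 : ∀ t < t₀, f t = 0) (ht : t₀ < 2 * n - 1) (v : V) :
    ⁅FspC n (n : ℤ) (facC n t₀), rActC n f v⁆ =
      rActC n (Function.update f t₀ (f t₀ + 1)) v := by
  have h0' : ∀ t < t₀, Function.update f t₀ (f t₀ + 1) t = 0 := by
    intro t htt; rw [Function.update_of_ne (by omega)]; exact h0 t htt
  rw [rAct_peel h0' ht (by simp)]
  have harg : Function.update (Function.update f t₀ (f t₀ + 1)) t₀
      (Function.update f t₀ (f t₀ + 1) t₀ - 1) = f := by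
    funext t
    by_cases h : t = t₀
    · subst h; simp
    · simp [Function.update_of_ne h]
  rw [harg]

lemma rAct_deg_zero {f : ℕ → ℕ} (h : ∀ t < 2 * n - 1, f t = 0) (v : V) :
    rActC n f v = v := by
  rw [rActC_eq_Wact]
  have : wordC n f = [] := List.flatMap_eq_nil_iff.mpr fun t htt => by
    rw [h t (List.mem_range.mp htt)]; rfl
  rw [this]; rfl

end WordLemmas

/-! ### the span of ordered monomials of bounded degree and given weight -/

noncomputable def SSC (n : ℕ) {V : Type} [AddCommGroup V] [Module ℂ V]
    [LieRingModule (spAlgC n) V] [LieModule ℂ (spAlgC n) V] (v : V) (d : ℕ) (w : ℕ → ℤ) :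
    Submodule ℂ V :=
  Submodule.span ℂ {u | ∃ g, SuppC n g ∧ degC n g ≤ d ∧ wtLev n g = w ∧ u = rActC n g v}

section SSCLemmas

variable {n : ℕ} {V : Type} [AddCommGroup V] [Module ℂ V]
    [LieRingModule (spAlgC n) V] [LieModule ℂ (spAlgC n) V] {v : V}

lemma mem_SSC_gen {g : ℕ → ℕ} {d : ℕ} {w : ℕ → ℤ} (h1 : SuppC n g) (h2 : degC n g ≤ d)
    (h3 : wtLev n g = w) : rActC n g v ∈ SSC n v d w :=
  Submodule.subset_span ⟨g, h1, h2, h3, rfl⟩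

lemma SSC_mono {d d' : ℕ} {w w' : ℕ → ℤ} (hd : d ≤ d') (hw : w = w') :
    SSC n v d w ≤ SSC n v d' w' := by
  subst hw
  exact Submodule.span_mono fun u ⟨g, h1, h2, h3, h4⟩ => ⟨g, h1, le_trans h2 hd, h3, h4⟩

lemma lie_mem_SSC {d : ℕ} {w : ℕ → ℤ} {T : Submodule ℂ V} (y : spAlgC n) {X : V}
    (hX : X ∈ SSC n v d w)
    (h : ∀ g, SuppC n g → degC n g ≤ d → wtLev n g = w → ⁅y, rActC n g v⁆ ∈ T) :
    ⁅y, X⁆ ∈ T := by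
  induction hX using Submodule.span_induction with
  | mem u hu => obtain ⟨g, h1, h2, h3, rfl⟩ := hu; exact h g h1 h2 h3
  | zero => rw [lie_zero]; exact T.zero_mem
  | add x y _ _ hx hy => rw [lie_add]; exact T.add_mem hx hy
  | smul a x _ hx => rw [lie_smul]; exact T.smul_mem a hx

/-- `wtF n (-k) + wtF n k = wtF n (-n)`. -/
lemma waux1 (hn : 1 ≤ n) {k : ℤ} (hk : k ≠ 0) :
    wtF (n : ℤ) (-k) + wtF (n : ℤ) k = wtF (n : ℤ) (-(n : ℤ)) := by
  rw [wtF_eq, wtF_eq, wtF_eq, phiW_neg hk, phiW_neg (by omega : (n:ℤ) ≠ 0)]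
  ring

lemma lemC_caseA (hn : 1 ≤ n) {k : ℤ} {f : ℕ → ℕ} (hk : ValidC n k) (hkn : k ≠ (n : ℤ))
    (hf : SuppC n f) (h0 : ∀ t < posOf n k, f t = 0) :
    ⁅FspC n (n : ℤ) k, rActC n f v⁆ ∈
      SSC n v (degC n f + 1) (wtLev n f + wtF (n : ℤ) k) := by
  have ht := posOf_lt hn hk hkn
  have heq := rAct_bump (n := n) (f := f) (t₀ := posOf n k) h0 ht v
  rw [facC_posOf hn hk hkn] at heq
  rw [heq]
  apply mem_SSC_gen (SuppC_update hf ht _)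
  · have := degC_update f ht (f (posOf n k) + 1)
    omega
  · rw [wtLev_update f ht, facC_posOf hn hk hkn]
    funext m
    simp only [Pi.add_apply]
    push_cast
    ring

end SSCLemmas

section MainLemmas

variable {n : ℕ} {V : Type} [AddCommGroup V] [Module ℂ V]
    [LieRingModule (spAlgC n) V] [LieModule ℂ (spAlgC n) V] {v : V}

/-- Straightening: the bracket of an `r`-generator with an ordered monomial applied to
any vector lies in the span of ordered monomials of the expected weight and degree. -/
lemma lemC (hn : 1 ≤ n) : ∀ (μ : ℕ) (k : ℤ) (f : ℕ → ℕ), ValidC n k → k ≠ (n : ℤ) →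
    SuppC n f → degC n f * (2 * n) + posOf n k ≤ μ →
    ⁅FspC n (n : ℤ) k, rActC n f v⁆ ∈
      SSC n v (degC n f + 1) (wtLev n f + wtF (n : ℤ) k) := by
  intro μ
  induction μ with
  | zero =>
      intro k f hk hkn hf hμ
      exact lemC_caseA hn hk hkn hf (fun t htt => absurd htt (by omega))
  | succ μ IH =>
      intro k f hk hkn hf hμ
      by_cases hA : ∀ t < posOf n k, f t = 0
      · exact lemC_caseA hn hk hkn hf hA
      push_neg at hA
      obtain ⟨t₁, ht₁, hft₁⟩ := hA
      have hex : ∃ t, f t ≠ 0 := ⟨t₁, hft₁⟩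
      have hft₀ : f (Nat.find hex) ≠ 0 := Nat.find_spec hex
      set t₀ := Nat.find hex with ht₀def
      have ht₀k : t₀ < posOf n k := lt_of_le_of_lt (Nat.find_min' hex hft₁) ht₁
      have ht₀ : t₀ < 2 * n - 1 := lt_trans ht₀k (posOf_lt hn hk hkn)
      have h0 : ∀ t < t₀, f t = 0 := by
        intro t htt
        by_contra hc
        exact absurd (Nat.find_min' hex hc) (by omega)
      obtain ⟨hcv, hcn⟩ := facC_valid hn ht₀
      set c := facC n t₀ with hcdef
      set f' := Function.update f t₀ (f t₀ - 1) with hf'def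
      have hf'supp : SuppC n f' := SuppC_update hf ht₀ _
      have hdegf : 1 ≤ degC n f := by
        by_contra h
        exact hft₀ (degC_eq_zero (by omega) ht₀)
      have hdeg' : degC n f' = degC n f - 1 := by
        rw [hf'def]
        have := degC_update f ht₀ (f t₀ - 1)
        have hft₀' : 1 ≤ f t₀ := by omega
        omega
      have hwt' : wtLev n f = wtLev n f' + wtF (n : ℤ) c := by
        rw [hf'def, wtLev_update f ht₀]
        funext m
        simp only [Pi.add_apply]
        have hcast : ((f t₀ - 1 : ℕ) : ℤ) = (f t₀ : ℤ) - 1 := by omega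
        rw [hcast, ← hcdef]
        ring
      have h2n : degC n f' * (2 * n) + 2 * n = degC n f * (2 * n) := by
        calc degC n f' * (2 * n) + 2 * n = (degC n f' + 1) * (2 * n) := by ring
          _ = degC n f * (2 * n) := by rw [show degC n f' + 1 = degC n f by omega]
      rw [rAct_peel (n := n) h0 ht₀ (by omega) v, ← hcdef, ← hf'def]
      rw [show (⁅FspC n (n : ℤ) k, ⁅FspC n (n : ℤ) c, rActC n f' v⁆⁆ : V) =
          ⁅⁅FspC n (n : ℤ) k, FspC n (n : ℤ) c⁆, rActC n f' v⁆ +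
            ⁅FspC n (n : ℤ) c, ⁅FspC n (n : ℤ) k, rActC n f' v⁆⁆ from by rw [lie_lie]; abel]
      apply Submodule.add_mem
      · -- central correction term
        rw [L2s hn hk hcv hkn hcn]
        by_cases hck : c = -k
        · rw [if_pos hck, smul_lie]
          apply Submodule.smul_mem
          have hp : posOf n (-(n : ℤ)) = 0 := by unfold posOf; rw [if_pos rfl]
          have hmem := IH (-(n : ℤ)) f' (valid_neg (valid_n hn)) (by omega) hf'supp
            (by rw [hp]; omega)
          refine SSC_mono (by omega) ?_ hmem
          rw [hwt', hck]
          rw [add_assoc, waux1 hn hk.1]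
        · rw [if_neg hck, zero_smul, zero_lie]
          exact Submodule.zero_mem _
      · -- straightened main term
        have hmem := IH k f' hk hkn hf'supp (by omega)
        refine lie_mem_SSC _ hmem ?_
        intro g hg hdg hwg
        have hpc : posOf n c = t₀ := posOf_facC hn ht₀
        have hmul : degC n g * (2 * n) ≤ degC n f * (2 * n) :=
          Nat.mul_le_mul_right _ (by omega)
        have hmem2 := IH c g hcv hcn hg (by omega)
        refine SSC_mono (by omega) ?_ hmem2
        rw [hwg, hwt']
        abel

end MainLemmas

section MainLemmas2

variable {n : ℕ} {V : Type} [AddCommGroup V] [Module ℂ V]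
    [LieRingModule (spAlgC n) V] [LieModule ℂ (spAlgC n) V] {v : V}

lemma lemC' (hn : 1 ≤ n) {k : ℤ} {f : ℕ → ℕ} (hk : ValidC n k) (hkn : k ≠ (n : ℤ))
    (hf : SuppC n f) :
    ⁅FspC n (n : ℤ) k, rActC n f v⁆ ∈
      SSC n v (degC n f + 1) (wtLev n f + wtF (n : ℤ) k) :=
  lemC hn (degC n f * (2 * n) + posOf n k) k f hk hkn hf le_rfl

lemma waux2 (a i j : ℤ) : wtF a j = wtF a i + wtF i j := by
  rw [wtF_eq, wtF_eq, wtF_eq]; ring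

lemma waux3 {i j : ℤ} (hi0 : i ≠ 0) (hj0 : j ≠ 0) (a : ℤ) :
    wtF a (-i) = wtF a (-j) + wtF i j := by
  rw [wtF_eq, wtF_eq, wtF_eq, phiW_neg hi0, phiW_neg hj0]; ring

lemma lemE (hn : 1 ≤ n) {i j : ℤ} (hi0 : i ≠ 0) (hj0 : j ≠ 0) (hi : |i| ≤ (n : ℤ) - 1)
    (hj : |j| ≤ (n : ℤ) - 1) (hv0 : ⁅FspC n i j, v⁆ = 0) :
    ∀ (d : ℕ) (f : ℕ → ℕ), SuppC n f → degC n f ≤ d →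
      ⁅FspC n i j, rActC n f v⁆ ∈ SSC n v (degC n f + 1) (wtLev n f + wtF i j) := by
  have hiv : ValidC n i := ⟨hi0, by have := abs_le.mp hi; rw [abs_le]; omega⟩
  have hjv : ValidC n j := ⟨hj0, by have := abs_le.mp hj; rw [abs_le]; omega⟩
  have hin : i ≠ (n : ℤ) := by have := abs_le.mp hi; omega
  have hjn : j ≠ (n : ℤ) := by have := abs_le.mp hj; omega
  have hnegin : -i ≠ (n : ℤ) := by have := abs_le.mp hi; omega
  intro d
  induction d with
  | zero =>
      intro f hf hd
      rw [rAct_deg_zero (fun t htt => degC_eq_zero (by omega) htt) v, hv0]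
      exact Submodule.zero_mem _
  | succ d IH =>
      intro f hf hd
      by_cases hzero : degC n f = 0
      · rw [rAct_deg_zero (fun t htt => degC_eq_zero hzero htt) v, hv0]
        exact Submodule.zero_mem _
      obtain ⟨t₁, ht₁, hft₁⟩ := degC_pos_exists hzero
      have hex : ∃ t, f t ≠ 0 := ⟨t₁, hft₁⟩
      have hft₀ : f (Nat.find hex) ≠ 0 := Nat.find_spec hex
      set t₀ := Nat.find hex with ht₀def
      have ht₀ : t₀ < 2 * n - 1 := lt_of_le_of_lt (Nat.find_min' hex hft₁) ht₁
      have h0 : ∀ t < t₀, f t = 0 := by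
        intro t htt
        by_contra hc
        exact absurd (Nat.find_min' hex hc) (by omega)
      obtain ⟨hcv, hcn⟩ := facC_valid hn ht₀
      set c := facC n t₀ with hcdef
      set f' := Function.update f t₀ (f t₀ - 1) with hf'def
      have hf'supp : SuppC n f' := SuppC_update hf ht₀ _
      have hdeg' : degC n f' = degC n f - 1 := by
        rw [hf'def]
        have := degC_update f ht₀ (f t₀ - 1)
        have hft₀' : 1 ≤ f t₀ := by omega
        omega
      have hwt' : wtLev n f = wtLev n f' + wtF (n : ℤ) c := by
        rw [hf'def, wtLev_update f ht₀]
        funext m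
        simp only [Pi.add_apply]
        have hcast : ((f t₀ - 1 : ℕ) : ℤ) = (f t₀ : ℤ) - 1 := by omega
        rw [hcast, ← hcdef]
        ring
      rw [rAct_peel (n := n) h0 ht₀ (by omega) v, ← hcdef, ← hf'def]
      rw [show (⁅FspC n i j, ⁅FspC n (n : ℤ) c, rActC n f' v⁆⁆ : V) =
          ⁅⁅FspC n i j, FspC n (n : ℤ) c⁆, rActC n f' v⁆ +
            ⁅FspC n (n : ℤ) c, ⁅FspC n i j, rActC n f' v⁆⁆ from by rw [lie_lie]; abel]
      apply Submodule.add_mem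
      · -- replacement terms
        rw [L1s hn hi0 hj0 hi hj hcv hcn, add_lie, smul_lie, smul_lie]
        apply Submodule.add_mem
        · by_cases hci : c = i
          · rw [if_pos hci]
            apply Submodule.smul_mem
            have hmem := lemC' (v := v) hn hjv hjn hf'supp
            refine SSC_mono (by omega) ?_ hmem
            rw [hwt', hci]
            rw [add_assoc, ← waux2 (n : ℤ) i j]
          · rw [if_neg hci, neg_zero, zero_smul]
            exact Submodule.zero_mem _
        · by_cases hcj : c = -j
          · rw [if_pos hcj]
            apply Submodule.smul_mem
            have hmem := lemC' (v := v) hn (valid_neg hiv) hnegin hf'supp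
            refine SSC_mono (by omega) ?_ hmem
            rw [hwt', hcj]
            rw [add_assoc, ← waux3 hi0 hj0 (n : ℤ)]
          · rw [if_neg hcj, zero_smul]
            exact Submodule.zero_mem _
      · -- straightened main term
        have hmem := IH f' hf'supp (by omega)
        refine lie_mem_SSC _ hmem ?_
        intro g hg hdg hwg
        have hmem2 := lemC' (v := v) hn hcv hcn hg
        refine SSC_mono (by omega) ?_ hmem2
        rw [hwg, hwt']
        abel

end MainLemmas2

lemma valid_mono {n : ℕ} {i : ℤ} (h : ValidC (n - 1) i) : ValidC n i := by
  obtain ⟨h0, hb⟩ := h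
  refine ⟨h0, le_trans hb (by push_cast; omega)⟩

theorem sp_order_satisfies_br' (n : ℕ) (hn : 2 ≤ n) :
    ∀ (V : Type) [AddCommGroup V] [Module ℂ V] [LieRingModule (spAlgC n) V]
      [LieModule ℂ (spAlgC n) V] [FiniteDimensional ℂ V]
      [LieModule.IsIrreducible ℂ (spAlgC n) V]
      (lam : ℕ → ℤ) (v : V),
      (∀ i, 1 ≤ i → i < n → lam (i + 1) ≤ lam i) → (∀ i, 1 ≤ i → i ≤ n → lam i ≤ 0) →
      v ≠ 0 →
      (∀ i j : ℤ, ValidC n i → ValidC n j → i < j → ⁅FspC n i j, v⁆ = 0) →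
      (∀ i : ℕ, 1 ≤ i → i ≤ n → ⁅FspC n (i : ℤ) (i : ℤ), v⁆ = ((lam i : ℂ)) • v) →
      ∀ x : spAlgC n,
        (x : glC (2 * n)) ∈ Submodule.span ℂ
          {y | ∃ i j : ℤ, ValidC (n - 1) i ∧ ValidC (n - 1) j ∧ i < j ∧ y = FmatZ n i j} →
        ∀ e : ℕ → ℕ, SuppC n e → e ≠ 0 →
        ⁅x, rActC n e v⁆ ∈
          Submodule.span ℂ
            {u : V | ∃ f, SuppC n f ∧ ltC n f e ∧
              ∃ l : List (ℤ × ℤ),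
                (∀ y ∈ l, ValidC (n - 1) y.1 ∧ ValidC (n - 1) y.2 ∧ y.2 < y.1) ∧
                u = l.foldr (fun (y : ℤ × ℤ) w => ⁅FspC n y.1 y.2, w⁆) (rActC n f v)} := by
  intro V _ _ _ _ _ _ lam v _ _ _ hraise _ x hx e hSupp _
  have hn1 : 1 ≤ n := by omega
  set Target := Submodule.span ℂ
    {u : V | ∃ f, SuppC n f ∧ ltC n f e ∧
      ∃ l : List (ℤ × ℤ),
        (∀ y ∈ l, ValidC (n - 1) y.1 ∧ ValidC (n - 1) y.2 ∧ y.2 < y.1) ∧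
        u = l.foldr (fun (y : ℤ × ℤ) w => ⁅FspC n y.1 y.2, w⁆) (rActC n f v)} with hT
  -- Step 1: inclusion of the weight spans into the target
  have hincl : ∀ (i j : ℤ), ValidC n i → ValidC n j → i < j → ∀ d,
      SSC n v d (wtLev n e + wtF i j) ≤ Target := by
    intro i j hiv hjv hij d
    rw [SSC, hT]
    apply Submodule.span_le.mpr
    rintro u ⟨g, hg1, _, hg3, rfl⟩
    apply Submodule.subset_span
    refine ⟨g, hg1, Or.inl ?_, [], by simp, rfl⟩
    have : wtLev n g - wtLev n e = wtF i j := by rw [hg3]; abel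
    rw [this]
    exact ⟨i, j, hiv, hjv, hij, rfl⟩
  -- Step 2: lift x into the span of the FspC generators
  set Sl : Set (spAlgC n) :=
    {y | ∃ i j : ℤ, ValidC (n - 1) i ∧ ValidC (n - 1) j ∧ i < j ∧ y = FspC n i j} with hSl
  have hxl : x ∈ Submodule.span ℂ Sl := by
    have hsub : {y : glC (2 * n) | ∃ i j : ℤ, ValidC (n - 1) i ∧ ValidC (n - 1) j ∧ i < j ∧
        y = FmatZ n i j} ⊆ ((spAlgC n).toSubmodule.subtype) '' Sl := by
      rintro y ⟨i, j, hi, hj, hij, rfl⟩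
      exact ⟨FspC n i j, ⟨i, j, hi, hj, hij, rfl⟩, FspC_coe (valid_mono hi) (valid_mono hj)⟩
    have hx2 : (x : glC (2 * n)) ∈
        Submodule.map ((spAlgC n).toSubmodule.subtype) (Submodule.span ℂ Sl) := by
      rw [← Submodule.span_image]
      exact Submodule.span_mono hsub hx
    obtain ⟨x', hx', hxx⟩ := hx2
    have : x' = x := Subtype.ext hxx
    rwa [this] at hx'
  -- Step 3: induction over the span
  clear hx
  induction hxl using Submodule.span_induction with
  | mem y hy =>
      obtain ⟨i, j, hi, hj, hij, rfl⟩ := hy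
      have hi' : |i| ≤ (n : ℤ) - 1 := by
        have := hi.2; push_cast at this ⊢; omega
      have hj' : |j| ≤ (n : ℤ) - 1 := by
        have := hj.2; push_cast at this ⊢; omega
      have hv0 : ⁅FspC n i j, v⁆ = 0 :=
        hraise i j (valid_mono hi) (valid_mono hj) hij
      have hmem := lemE hn1 hi.1 hj.1 hi' hj' hv0 (degC n e) e hSupp le_rfl
      exact hincl i j (valid_mono hi) (valid_mono hj) hij _ hmem
  | zero => rw [zero_lie]; exact Submodule.zero_mem _
  | add y z _ _ hy hz => rw [add_lie]; exact Submodule.add_mem _ hy hz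
  | smul a y _ hy => rw [smul_lie]; exact Submodule.smul_mem _ a hy

theorem sp_order_satisfies_br (n : ℕ) (hn : 2 ≤ n) :
    ∀ (V : Type) [AddCommGroup V] [Module ℂ V] [LieRingModule (spAlgC n) V]
      [LieModule ℂ (spAlgC n) V] [FiniteDimensional ℂ V]
      [LieModule.IsIrreducible ℂ (spAlgC n) V]
      (lam : ℕ → ℤ) (v : V),
      (∀ i, 1 ≤ i → i < n → lam (i + 1) ≤ lam i) → (∀ i, 1 ≤ i → i ≤ n → lam i ≤ 0) →
      v ≠ 0 →
      (∀ i j : ℤ, ValidC n i → ValidC n j → i < j → ⁅FspC n i j, v⁆ = 0) →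
      (∀ i : ℕ, 1 ≤ i → i ≤ n → ⁅FspC n (i : ℤ) (i : ℤ), v⁆ = ((lam i : ℂ)) • v) →
      ∀ x : spAlgC n,
        (x : glC (2 * n)) ∈ Submodule.span ℂ
          {y | ∃ i j : ℤ, ValidC (n - 1) i ∧ ValidC (n - 1) j ∧ i < j ∧ y = FmatZ n i j} →
        ∀ e : ℕ → ℕ, SuppC n e → e ≠ 0 →
        ⁅x, rActC n e v⁆ ∈
          Submodule.span ℂ
            {u : V | ∃ f, SuppC n f ∧ ltC n f e ∧
              ∃ l : List (ℤ × ℤ),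
                (∀ y ∈ l, ValidC (n - 1) y.1 ∧ ValidC (n - 1) y.2 ∧ y.2 < y.1) ∧
                u = l.foldr (fun (y : ℤ × ℤ) w => ⁅FspC n y.1 y.2, w⁆) (rActC n f v)} :=
  sp_order_satisfies_br' n hn
end

section
/- Let d_1,…,d_n be nonnegative integers. Then the number of tuples (b, b_2,…,b_n) of nonnegative integers satisfying b_k ≤ d_k for 2 ≤ k ≤ n, b_k ≤ d_1 + Σ_{i=2}^{k−1}(d_i − 2 b_i) for 2 ≤ k ≤ n, and b + 2 Σ_{k=2}^{n} b_k ≤ Σ_{i=1}^{n} d_i, is equal to ∏_{i=1}^{n} (d_i + 1). -/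
open Finset

noncomputable instance : DecidableEq (ℕ → ℕ) := Classical.decEq _

namespace MultCount

/-- remaining capacity -/
def Snat (d : ℕ → ℕ) (n : ℕ) (f : ℕ → ℕ) : ℕ :=
  (∑ i ∈ Icc 1 n, d i) - 2 * ∑ k ∈ Icc 2 n, f k

/-- the finset of valid tuples (b₂,…,b_n), encoded as functions. -/
noncomputable def B (d : ℕ → ℕ) : ℕ → Finset (ℕ → ℕ)
  | 0 => {fun _ => 0}
  | n + 1 => (B d n).biUnion fun f =>
      (range (min (d (n + 1)) (Snat d n f) + 1)).image fun j => Function.update f (n + 1) j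

lemma Snat_zero (d : ℕ → ℕ) (f : ℕ → ℕ) : Snat d 0 f = 0 := by
  unfold Snat
  rw [Finset.Icc_eq_empty (by omega)]
  simp

lemma mem_B_succ {d : ℕ → ℕ} {n : ℕ} {g : ℕ → ℕ} :
    g ∈ B d (n + 1) ↔ ∃ f ∈ B d n, ∃ j, j ≤ min (d (n + 1)) (Snat d n f) ∧
      g = Function.update f (n + 1) j := by
  simp only [B, Finset.mem_biUnion, Finset.mem_image, Finset.mem_range, Nat.lt_succ_iff]
  constructor
  · rintro ⟨f, hf, j, hj, rfl⟩; exact ⟨f, hf, j, hj, rfl⟩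
  · rintro ⟨f, hf, j, hj, rfl⟩; exact ⟨f, hf, j, hj, rfl⟩

lemma B_one (d : ℕ → ℕ) : B d 1 = {fun _ => 0} := by
  ext g
  rw [mem_B_succ]
  simp only [Finset.mem_singleton]
  constructor
  · rintro ⟨f, hf, j, hj, rfl⟩
    simp only [B, Finset.mem_singleton] at hf
    subst hf
    have hj0 : j = 0 := by
      have := hj.trans (min_le_right _ _)
      rw [Snat_zero] at this; omega
    subst hj0
    funext k
    rcases eq_or_ne k 1 with rfl | h
    · simp
    · simp [Function.update_of_ne h]
  · rintro rfl
    refine ⟨fun _ => 0, by simp [B], 0, by simp, ?_⟩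
    funext k
    rcases eq_or_ne k 1 with rfl | h
    · simp
    · simp [Function.update_of_ne h]

lemma Icc_split {M : Type*} [AddCommMonoid M] {n : ℕ} (hn : 1 ≤ n) (F : ℕ → M) :
    ∑ i ∈ Icc 1 n, F i = F 1 + ∑ i ∈ Icc 2 n, F i := by
  have h : Icc 1 n = insert 1 (Icc 2 n) := by
    ext x; simp only [mem_Icc, mem_insert]; omega
  rw [h, Finset.sum_insert (by simp)]

/-- support and capacity invariants -/
lemma B_props (d : ℕ → ℕ) : ∀ n, 1 ≤ n → ∀ f ∈ B d n,
    (∀ k, k < 2 ∨ n < k → f k = 0) ∧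
    2 * ∑ k ∈ Icc 2 n, f k ≤ ∑ i ∈ Icc 1 n, d i := by
  intro n
  induction n with
  | zero => omega
  | succ n ih =>
    intro _ g hg
    rcases Nat.eq_zero_or_pos n with rfl | hn
    · rw [B_one] at hg
      simp only [Finset.mem_singleton] at hg
      subst hg
      constructor
      · intro k _; rfl
      · simp
    · rw [mem_B_succ] at hg
      obtain ⟨f, hf, j, hj, rfl⟩ := hg
      obtain ⟨hsupp, hinv⟩ := ih hn f hf
      have hne : ∀ k, k ≠ n + 1 → Function.update f (n+1) j k = f k :=
        fun k hk => Function.update_of_ne hk _ _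
      have hsupp' : ∀ k, k < 2 ∨ n + 1 < k → Function.update f (n+1) j k = 0 := by
        intro k hk
        have hk1 : k ≠ n + 1 := by omega
        rw [hne k hk1]
        exact hsupp k (by omega)
      refine ⟨hsupp', ?_⟩
      have h1 : ∑ k ∈ Icc 2 (n+1), Function.update f (n+1) j k
          = (∑ k ∈ Icc 2 n, f k) + j := by
        rw [Finset.sum_Icc_succ_top (by omega)]
        congr 1
        · exact Finset.sum_congr rfl fun k hk => hne k (by simp only [mem_Icc] at hk; omega)
        · simp
      have h2 : ∑ i ∈ Icc 1 (n+1), d i = (∑ i ∈ Icc 1 n, d i) + d (n+1) :=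
        Finset.sum_Icc_succ_top (by omega) _
      rw [h1, h2]
      have hj1 : j ≤ d (n+1) := hj.trans (min_le_left _ _)
      have hj2 : j ≤ Snat d n f := hj.trans (min_le_right _ _)
      unfold Snat at hj2
      omega

/-- the key cast identity for the partial-sum condition -/
lemma key_eq (d : ℕ → ℕ) {n : ℕ} (hn : 1 ≤ n) (f : ℕ → ℕ)
    (hinv : 2 * ∑ k ∈ Icc 2 n, f k ≤ ∑ i ∈ Icc 1 n, d i) :
    (d 1 : ℤ) + ∑ i ∈ Finset.Ico 2 (n + 1), ((d i : ℤ) - 2 * (f i : ℤ))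
      = (Snat d n f : ℤ) := by
  rw [Finset.Ico_add_one_right_eq_Icc, Finset.sum_sub_distrib]
  have hd : ∑ i ∈ Icc 1 n, (d i : ℤ) = (d 1 : ℤ) + ∑ i ∈ Icc 2 n, (d i : ℤ) :=
    Icc_split hn _
  have c1 : ((∑ i ∈ Icc 1 n, d i : ℕ) : ℤ) = ∑ i ∈ Icc 1 n, (d i : ℤ) := by push_cast; rfl
  have c2 : ((∑ i ∈ Icc 2 n, d i : ℕ) : ℤ) = ∑ i ∈ Icc 2 n, (d i : ℤ) := by push_cast; rfl
  have c3 : ((∑ i ∈ Icc 2 n, f i : ℕ) : ℤ) = ∑ i ∈ Icc 2 n, (f i : ℤ) := by push_cast; rfl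
  have hmul : ∑ i ∈ Icc 2 n, (2 * (f i : ℤ)) = 2 * ∑ i ∈ Icc 2 n, (f i : ℤ) :=
    (Finset.mul_sum _ _ _).symm
  rw [hmul]
  unfold Snat
  omega

/-- characterization of membership in `B d n` -/
lemma mem_B_iff (d : ℕ → ℕ) : ∀ n, 1 ≤ n → ∀ f : ℕ → ℕ,
    (f ∈ B d n ↔
      (∀ k, k < 2 ∨ n < k → f k = 0) ∧
      (∀ k, 2 ≤ k → k ≤ n → f k ≤ d k) ∧
      (∀ k, 2 ≤ k → k ≤ n →
        (f k : ℤ) ≤ (d 1 : ℤ) + ∑ i ∈ Finset.Ico 2 k, ((d i : ℤ) - 2 * (f i : ℤ)))) := by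
  intro n
  induction n with
  | zero => omega
  | succ n ih =>
    intro _ g
    rcases Nat.eq_zero_or_pos n with rfl | hn
    · rw [B_one]
      simp only [Finset.mem_singleton]
      constructor
      · rintro rfl
        exact ⟨fun _ _ => rfl, fun k h1 h2 => by omega, fun k h1 h2 => by omega⟩
      · rintro ⟨h1, -, -⟩
        funext k
        exact h1 k (by omega)
    · constructor
      · rw [mem_B_succ]
        rintro ⟨f, hf, j, hj, rfl⟩
        obtain ⟨h1, h2, h3⟩ := (ih hn f).1 hf
        obtain ⟨hsupp, hinv⟩ := B_props d n hn f hf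
        have hne : ∀ k, k ≠ n + 1 → Function.update f (n+1) j k = f k :=
          fun k hk => Function.update_of_ne hk _ _
        refine ⟨?_, ?_, ?_⟩
        · intro k hk
          rw [hne k (by omega)]
          exact h1 k (by omega)
        · intro k hk2 hkn
          rcases eq_or_ne k (n+1) with rfl | hk
          · rw [Function.update_self]
            exact hj.trans (min_le_left _ _)
          · rw [hne k hk]; exact h2 k hk2 (by omega)
        · intro k hk2 hkn
          have hsum : ∀ m, m ≤ n + 1 →
              ∑ i ∈ Finset.Ico 2 m, ((d i : ℤ) - 2 * ((Function.update f (n+1) j i : ℕ) : ℤ))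
                = ∑ i ∈ Finset.Ico 2 m, ((d i : ℤ) - 2 * (f i : ℤ)) := by
            intro m hm
            refine Finset.sum_congr rfl fun i hi => ?_
            simp only [Finset.mem_Ico] at hi
            rw [hne i (by omega)]
          rcases eq_or_ne k (n+1) with rfl | hk
          · rw [Function.update_self, hsum (n+1) le_rfl, key_eq d hn f hinv]
            have : j ≤ Snat d n f := hj.trans (min_le_right _ _)
            exact_mod_cast this
          · rw [hne k hk, hsum k (by omega)]
            exact h3 k hk2 (by omega)
      · rintro ⟨h1, h2, h3⟩
        set f := Function.update g (n+1) 0 with hfdef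
        have hgne : ∀ k, k ≠ n + 1 → f k = g k :=
          fun k hk => Function.update_of_ne hk _ _
        have hf : f ∈ B d n := by
          rw [ih hn f]
          refine ⟨?_, ?_, ?_⟩
          · intro k hk
            rcases eq_or_ne k (n+1) with rfl | h
            · exact Function.update_self _ _ _
            · rw [hgne k h]; exact h1 k (by omega)
          · intro k hk2 hkn
            rw [hgne k (by omega)]
            exact h2 k hk2 (by omega)
          · intro k hk2 hkn
            have hsum : ∑ i ∈ Finset.Ico 2 k, ((d i : ℤ) - 2 * ((f i : ℕ) : ℤ))
                = ∑ i ∈ Finset.Ico 2 k, ((d i : ℤ) - 2 * (g i : ℤ)) := by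
              refine Finset.sum_congr rfl fun i hi => ?_
              simp only [Finset.mem_Ico] at hi
              rw [hgne i (by omega)]
            rw [hgne k (by omega), hsum]
            exact h3 k hk2 (by omega)
        obtain ⟨-, hinv⟩ := B_props d n hn f hf
        have hj1 : g (n+1) ≤ d (n+1) := h2 (n+1) (by omega) le_rfl
        have hj2 : g (n+1) ≤ Snat d n f := by
          have h3' := h3 (n+1) (by omega) le_rfl
          have hsum : ∑ i ∈ Finset.Ico 2 (n+1), ((d i : ℤ) - 2 * (g i : ℤ))
              = ∑ i ∈ Finset.Ico 2 (n+1), ((d i : ℤ) - 2 * ((f i : ℕ) : ℤ)) := by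
            refine Finset.sum_congr rfl fun i hi => ?_
            simp only [Finset.mem_Ico] at hi
            rw [hgne i (by omega)]
          rw [hsum, key_eq d hn f hinv] at h3'
          exact_mod_cast h3'
        rw [mem_B_succ]
        refine ⟨f, hf, g (n+1), le_min hj1 hj2, ?_⟩
        funext k
        rcases eq_or_ne k (n+1) with rfl | h
        · rw [Function.update_self]
        · rw [Function.update_of_ne h, hgne k h]

/-- Clebsch–Gordan counting identity -/
lemma cg (a c : ℕ) :
    ∑ j ∈ Finset.range (min a c + 1), (a + c - 2 * j + 1) = (a + 1) * (c + 1) := by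
  set m := min a c with hm
  have hma : m ≤ a := min_le_left _ _
  have hmc : m ≤ c := min_le_right _ _
  have key : ((∑ j ∈ Finset.range (m + 1), (a + c - 2 * j + 1) : ℕ) : ℤ)
      = ((a : ℤ) + 1) * ((c : ℤ) + 1) := by
    rw [Nat.cast_sum]
    have hterm : ∀ j ∈ Finset.range (m + 1),
        ((a + c - 2 * j + 1 : ℕ) : ℤ) = ((a : ℤ) + c + 1) - 2 * j := by
      intro j hj
      simp only [Finset.mem_range] at hj
      have : 2 * j ≤ a + c := by omega
      push_cast [Nat.cast_sub this]
      ring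
    rw [Finset.sum_congr rfl hterm, Finset.sum_sub_distrib, Finset.sum_const,
      Finset.card_range, ← Finset.mul_sum]
    have hgauss : (∑ j ∈ Finset.range (m + 1), (j : ℤ)) * 2 = ((m : ℤ) + 1) * m := by
      have h0 := Finset.sum_range_id_mul_two (m + 1)
      simp only [Nat.add_sub_cancel] at h0
      have h1 : ((∑ i ∈ Finset.range (m + 1), i : ℕ) : ℤ) * 2 = ((m : ℤ) + 1) * m := by
        exact_mod_cast congrArg (Nat.cast : ℕ → ℤ) h0
      rw [Nat.cast_sum] at h1
      exact h1
    have hsum : 2 * (∑ j ∈ Finset.range (m + 1), (j : ℤ)) = ((m : ℤ) + 1) * m := by linarith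
    rw [hsum]
    rcases le_total a c with h | h
    · rw [hm, min_eq_left h]; ring
    · rw [hm, min_eq_right h]; ring
  exact_mod_cast key

lemma B_succ_def (d : ℕ → ℕ) (n : ℕ) :
    B d (n + 1) = (B d n).biUnion fun f =>
      (range (min (d (n + 1)) (Snat d n f) + 1)).image fun j => Function.update f (n + 1) j := rfl

lemma Snat_update (d : ℕ → ℕ) {n : ℕ} (hn : 1 ≤ n) {f : ℕ → ℕ} (hf : f ∈ B d n) {j : ℕ}
    (hj : j ≤ min (d (n + 1)) (Snat d n f)) :
    Snat d (n + 1) (Function.update f (n + 1) j) = Snat d n f + d (n + 1) - 2 * j := by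
  obtain ⟨hsupp, hinv⟩ := B_props d n hn f hf
  have hne : ∀ k, k ≠ n + 1 → Function.update f (n+1) j k = f k :=
    fun k hk => Function.update_of_ne hk _ _
  have h1 : ∑ k ∈ Icc 2 (n+1), Function.update f (n+1) j k = (∑ k ∈ Icc 2 n, f k) + j := by
    rw [Finset.sum_Icc_succ_top (by omega)]
    congr 1
    · exact Finset.sum_congr rfl fun k hk => hne k (by simp only [mem_Icc] at hk; omega)
    · simp
  have h2 : ∑ i ∈ Icc 1 (n+1), d i = (∑ i ∈ Icc 1 n, d i) + d (n+1) :=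
    Finset.sum_Icc_succ_top (by omega) _
  have hj1 : j ≤ d (n+1) := hj.trans (min_le_left _ _)
  have hj2 : j ≤ Snat d n f := hj.trans (min_le_right _ _)
  unfold Snat at hj2 ⊢
  rw [h1, h2]
  omega

lemma B_disj (d : ℕ → ℕ) {n : ℕ} (hn : 1 ≤ n) {f f' : ℕ → ℕ} (hf : f ∈ B d n) (hf' : f' ∈ B d n)
    {j j' : ℕ} (h : Function.update f (n+1) j = Function.update f' (n+1) j') : f = f' := by
  funext k
  rcases eq_or_ne k (n+1) with rfl | hk
  · rw [(B_props d n hn f hf).1 (n+1) (by omega), (B_props d n hn f' hf').1 (n+1) (by omega)]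
  · have := congrFun h k
    rwa [Function.update_of_ne hk, Function.update_of_ne hk] at this

lemma sum_B (d : ℕ → ℕ) : ∀ n, 1 ≤ n →
    ∑ f ∈ B d n, (Snat d n f + 1) = ∏ i ∈ Icc 1 n, (d i + 1) := by
  intro n
  induction n with
  | zero => omega
  | succ n ih =>
    intro _
    rcases Nat.eq_zero_or_pos n with rfl | hn
    · rw [B_one, Finset.sum_singleton]
      have h1 : Snat d 1 (fun _ => 0) = d 1 := by
        unfold Snat
        rw [Finset.Icc_self, Finset.Icc_eq_empty (by omega)]
        simp
      rw [h1, Finset.Icc_self, Finset.prod_singleton]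
    · rw [B_succ_def]
      have hdisj : (↑(B d n) : Set (ℕ → ℕ)).PairwiseDisjoint fun f =>
          (range (min (d (n + 1)) (Snat d n f) + 1)).image fun j =>
            Function.update f (n + 1) j := by
        intro f hf f' hf' hne
        simp only [Finset.mem_coe] at hf hf'
        simp only [Function.onFun]
        rw [Finset.disjoint_left]
        rintro g hg hg'
        simp only [Finset.mem_image, Finset.mem_range] at hg hg'
        obtain ⟨j, -, rfl⟩ := hg
        obtain ⟨j', -, h⟩ := hg'
        exact hne (B_disj d hn hf hf' h.symm)
      rw [Finset.sum_biUnion hdisj]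
      have hinner : ∀ f ∈ B d n,
          ∑ g ∈ (range (min (d (n + 1)) (Snat d n f) + 1)).image
              (fun j => Function.update f (n + 1) j), (Snat d (n+1) g + 1)
            = (Snat d n f + 1) * (d (n+1) + 1) := by
        intro f hf
        rw [Finset.sum_image]
        · have hcongr : ∀ j ∈ range (min (d (n + 1)) (Snat d n f) + 1),
              Snat d (n+1) (Function.update f (n+1) j) + 1
                = Snat d n f + d (n+1) - 2 * j + 1 := by
            intro j hj
            simp only [Finset.mem_range] at hj
            rw [Snat_update d hn hf (by omega)]
          rw [Finset.sum_congr rfl hcongr, min_comm]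
          exact cg (Snat d n f) (d (n+1))
        · intro j hj j' hj' h
          have := congrFun h (n+1)
          beta_reduce at this
          rwa [Function.update_self, Function.update_self] at this
      rw [Finset.sum_congr rfl hinner, ← Finset.sum_mul, ih hn,
        Finset.prod_Icc_succ_top (by omega)]

end MultCount

/--
Let `d 1, …, d n` be nonnegative integers.  The number of tuples
`(b, b₂, …, b_n)` of nonnegative integers satisfying
`b_k ≤ d_k` for `2 ≤ k ≤ n`,
`b_k ≤ d₁ + ∑_{i=2}^{k-1} (d_i − 2 b_i)` for `2 ≤ k ≤ n`, and
`b + 2 ∑_{k=2}^{n} b_k ≤ ∑_{i=1}^{n} d_i`,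
equals `∏_{i=1}^{n} (d_i + 1)`.
(Tuples are encoded as pairs `(b, bb)` with `bb : ℕ → ℕ` vanishing outside `[2, n]`.)
-/
theorem multiplicity_count (n : ℕ) (hn : 1 ≤ n) (d : ℕ → ℕ) :
    Set.ncard {p : ℕ × (ℕ → ℕ) |
        (∀ k, (k < 2 ∨ n < k) → p.2 k = 0) ∧
        (∀ k, 2 ≤ k → k ≤ n → p.2 k ≤ d k) ∧
        (∀ k, 2 ≤ k → k ≤ n →
          (p.2 k : ℤ) ≤ (d 1 : ℤ) + ∑ i ∈ Finset.Ico 2 k, ((d i : ℤ) - 2 * (p.2 i : ℤ))) ∧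
        ((p.1 : ℤ) + 2 * ∑ k ∈ Finset.Icc 2 n, (p.2 k : ℤ) ≤ ∑ i ∈ Finset.Icc 1 n, (d i : ℤ))} =
      ∏ i ∈ Finset.Icc 1 n, (d i + 1) := by
  classical
  open MultCount in
  set F : Finset (ℕ × (ℕ → ℕ)) := (B d n).biUnion
    (fun f => (Finset.range (Snat d n f + 1)).image fun b => (b, f)) with hF
  have c1 : ((∑ i ∈ Finset.Icc 1 n, d i : ℕ) : ℤ) = ∑ i ∈ Finset.Icc 1 n, (d i : ℤ) := by
    push_cast; rfl
  have hset : {p : ℕ × (ℕ → ℕ) |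
        (∀ k, (k < 2 ∨ n < k) → p.2 k = 0) ∧
        (∀ k, 2 ≤ k → k ≤ n → p.2 k ≤ d k) ∧
        (∀ k, 2 ≤ k → k ≤ n →
          (p.2 k : ℤ) ≤ (d 1 : ℤ) + ∑ i ∈ Finset.Ico 2 k, ((d i : ℤ) - 2 * (p.2 i : ℤ))) ∧
        ((p.1 : ℤ) + 2 * ∑ k ∈ Finset.Icc 2 n, (p.2 k : ℤ) ≤ ∑ i ∈ Finset.Icc 1 n, (d i : ℤ))}
      = ↑F := by
    ext ⟨b, f⟩
    rw [Finset.mem_coe, hF, Finset.mem_biUnion]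
    simp only [Set.mem_setOf_eq, Finset.mem_image, Finset.mem_range, Nat.lt_succ_iff,
      Prod.mk.injEq]
    have c3 : ((∑ k ∈ Finset.Icc 2 n, f k : ℕ) : ℤ) = ∑ k ∈ Finset.Icc 2 n, (f k : ℤ) := by
      push_cast; rfl
    constructor
    · rintro ⟨h1, h2, h3, h4⟩
      have hfB : f ∈ B d n := (mem_B_iff d n hn f).2 ⟨fun k hk => h1 k (by omega), h2, h3⟩
      have hinv := (B_props d n hn f hfB).2
      have hb : b ≤ Snat d n f := by unfold MultCount.Snat; omega
      exact ⟨f, hfB, b, hb, rfl, rfl⟩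
    · rintro ⟨f', hf', b', hb', rfl, rfl⟩
      obtain ⟨h1, h2, h3⟩ := (mem_B_iff d n hn f').1 hf'
      have hinv := (B_props d n hn f' hf').2
      refine ⟨fun k hk => h1 k (by omega), h2, h3, ?_⟩
      unfold MultCount.Snat at hb'
      have c3' : ((∑ k ∈ Finset.Icc 2 n, f' k : ℕ) : ℤ) = ∑ k ∈ Finset.Icc 2 n, (f' k : ℤ) := by
        push_cast; rfl
      omega
  rw [hset, Set.ncard_coe_finset, hF]
  have hdisj : ∀ x ∈ B d n, ∀ y ∈ B d n, x ≠ y →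
      Disjoint ((Finset.range (Snat d n x + 1)).image fun b => (b, x))
        ((Finset.range (Snat d n y + 1)).image fun b => (b, y)) := by
    intro x hx y hy hne
    rw [Finset.disjoint_left]
    rintro p hp hp'
    simp only [Finset.mem_image, Finset.mem_range] at hp hp'
    obtain ⟨bx, -, rfl⟩ := hp
    obtain ⟨by', -, h⟩ := hp'
    exact hne (congrArg Prod.snd h).symm
  rw [Finset.card_biUnion hdisj]
  have hcard : ∀ f ∈ B d n,
      ((Finset.range (Snat d n f + 1)).image fun b => (b, f)).card = Snat d n f + 1 := by
    intro f hf
    rw [Finset.card_image_of_injective _ (fun a b h => (Prod.ext_iff.1 h).1),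
      Finset.card_range]
  rw [Finset.sum_congr rfl hcard]
  exact sum_B d n hn
end
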